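/- Let X ~ MaxGumbel(μx, β) and Y ~ MinGumbel(μy, β) be independent with β > 0. Then E[max(Y - X, 0)] = 2β·K₀(2·e^{(μx - μy)/(2β)}), where K₀ is the modified Bessel function of the second kind of order 0. -/

import Mathlib

open MeasureTheory

/-- Density of a MaxGumbel(μ, β) random variable. -/
noncomputable def maxGumbelPDF (μ β x : ℝ) : ℝ :=
  (1 / β) * Real.exp (-(x - μ) / β - Real.exp (-(x - μ) / β))

/-- Density of a MinGumbel(μ, β) random variable. -/
noncomputable def minGumbelPDF (μ β y : ℝ) : ℝ :=
  (1 / β) * Real.exp ((y - μ) / β - Real.exp ((y - μ) / β))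

/-- Modified Bessel function of the second kind of order zero,
K₀(z) = ∫₀^∞ exp(-z cosh u) du. -/
noncomputable def besselK0 (z : ℝ) : ℝ :=
  ∫ u in Set.Ioi (0 : ℝ), Real.exp (-z * Real.cosh u)

open Set Real Filter
open scoped ENNReal

section Aux
namespace GumbelAux

lemma layer (a : ℝ) : ENNReal.ofReal (max a 0) =
    ∫⁻ q in Set.Ioi (0:ℝ), (Set.Iio a).indicator (fun _ => (1:ℝ≥0∞)) q := by
  rw [lintegral_indicator measurableSet_Iio, setLIntegral_one,
    Measure.restrict_apply measurableSet_Iio]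
  have : Set.Iio a ∩ Set.Ioi 0 = Set.Ioo 0 a := by ext x; simp [and_comm]
  rw [this, Real.volume_Ioo]
  rcases le_total a 0 with h | h
  · simp [max_eq_right h, ENNReal.ofReal_of_nonpos, h, sub_nonpos.mpr h]
  · simp [max_eq_left h]

lemma surv_deriv (μ β : ℝ) (hβ : 0 < β) (t : ℝ) :
    HasDerivAt (fun s => -Real.exp (-Real.exp ((s - μ) / β))) (minGumbelPDF μ β t) t := by
  have h1 : HasDerivAt (fun s : ℝ => (s - μ) / β) (1 / β) t := by
    simpa using ((hasDerivAt_id t).sub_const μ).div_const β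
  have h2 : HasDerivAt (fun s => -Real.exp (-Real.exp ((s - μ) / β))) _ t := (h1.exp).neg.exp.neg
  convert h2 using 1
  simp only [Pi.neg_apply]
  rw [minGumbelPDF, Real.exp_sub, Real.exp_neg]
  field_simp

lemma surv_tendsto (μ β : ℝ) (hβ : 0 < β) :
    Tendsto (fun s => -Real.exp (-Real.exp ((s - μ) / β))) atTop (nhds 0) := by
  have h1 : Tendsto (fun s : ℝ => (s - μ) / β) atTop atTop :=
    (tendsto_atTop_add_const_right _ (-μ) tendsto_id).atTop_div_const hβ
  have h2 : Tendsto (fun s : ℝ => -Real.exp ((s - μ) / β)) atTop atBot :=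
    tendsto_neg_atBot_iff.mpr (Real.tendsto_exp_atTop.comp h1)
  have h3 := Real.tendsto_exp_atBot.comp h2
  simpa using h3.neg

lemma minGumbel_nonneg (μ β y : ℝ) (hβ : 0 < β) : 0 ≤ minGumbelPDF μ β y := by
  unfold minGumbelPDF; positivity

lemma maxGumbel_nonneg (μ β x : ℝ) (hβ : 0 < β) : 0 ≤ maxGumbelPDF μ β x := by
  unfold maxGumbelPDF; positivity

lemma surv_int (μ β a : ℝ) (hβ : 0 < β) :
    IntegrableOn (minGumbelPDF μ β) (Set.Ioi a) ∧
    ∫ y in Set.Ioi a, minGumbelPDF μ β y = Real.exp (-Real.exp ((a - μ) / β)) := by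
  have hd : ∀ t ∈ Set.Ici a, HasDerivAt (fun s => -Real.exp (-Real.exp ((s - μ) / β)))
      (minGumbelPDF μ β t) t := fun t _ => surv_deriv μ β hβ t
  have hnn : ∀ t ∈ Set.Ioi a, 0 ≤ minGumbelPDF μ β t := fun t _ => minGumbel_nonneg μ β t hβ
  have ht := surv_tendsto μ β hβ
  refine ⟨integrableOn_Ioi_deriv_of_nonneg' hd hnn ht, ?_⟩
  rw [integral_Ioi_of_hasDerivAt_of_nonneg' hd hnn ht]
  ring

lemma qFTC (β r u : ℝ) (hβ : 0 < β) :
    IntegrableOn (fun q => (Real.exp (r + q/(2*β) + u) + Real.exp (r + q/(2*β) - u)) *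
      Real.exp (-(Real.exp (r + q/(2*β) + u) + Real.exp (r + q/(2*β) - u)))) (Set.Ioi 0) ∧
    ∫ q in Set.Ioi (0:ℝ), (Real.exp (r + q/(2*β) + u) + Real.exp (r + q/(2*β) - u)) *
      Real.exp (-(Real.exp (r + q/(2*β) + u) + Real.exp (r + q/(2*β) - u)))
      = 2*β * Real.exp (-(Real.exp (r+u) + Real.exp (r-u))) := by
  set G : ℝ → ℝ := fun q => -(2*β) * Real.exp (-(Real.exp (r + q/(2*β) + u) + Real.exp (r + q/(2*β) - u))) with hG
  have hd : ∀ q ∈ Set.Ici (0:ℝ), HasDerivAt G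
      ((Real.exp (r + q/(2*β) + u) + Real.exp (r + q/(2*β) - u)) *
        Real.exp (-(Real.exp (r + q/(2*β) + u) + Real.exp (r + q/(2*β) - u)))) q := by
    intro q _
    have hb : HasDerivAt (fun q : ℝ => q / (2*β)) (1/(2*β)) q := by
      simpa using (hasDerivAt_id q).div_const (2*β)
    have h1 : HasDerivAt (fun q : ℝ => r + q/(2*β) + u) (1/(2*β)) q := by
      simpa using ((hb.const_add r).add_const u)
    have h2 : HasDerivAt (fun q : ℝ => r + q/(2*β) - u) (1/(2*β)) q := by
      simpa using ((hb.const_add r).sub_const u)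
    have h3 : HasDerivAt G _ q := (((h1.exp.add h2.exp).neg).exp.const_mul (-(2*β)))
    convert h3 using 1
    simp only [Pi.neg_apply, Pi.add_apply]
    have h2β : (2*β) ≠ 0 := by positivity
    field_simp
  have hnn : ∀ q ∈ Set.Ioi (0:ℝ), 0 ≤ (Real.exp (r + q/(2*β) + u) + Real.exp (r + q/(2*β) - u)) *
      Real.exp (-(Real.exp (r + q/(2*β) + u) + Real.exp (r + q/(2*β) - u))) := by
    intro q _; positivity
  have ht : Tendsto G atTop (nhds 0) := by
    have h1 : Tendsto (fun q : ℝ => r + q/(2*β) + u) atTop atTop := by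
      apply tendsto_atTop_add_const_right
      apply tendsto_atTop_add_const_left
      exact tendsto_id.atTop_div_const (by positivity)
    have h2 : Tendsto (fun q : ℝ => -(Real.exp (r + q/(2*β) + u) + Real.exp (r + q/(2*β) - u))) atTop atBot := by
      apply tendsto_neg_atBot_iff.mpr
      apply Filter.Tendsto.atTop_add_nonneg (Real.tendsto_exp_atTop.comp h1)
      intro q; positivity
    have h3 := Real.tendsto_exp_atBot.comp h2
    have h4 := h3.const_mul (-(2*β))
    simp only [mul_zero] at h4
    convert h4 using 2 with q
    rfl
  refine ⟨integrableOn_Ioi_deriv_of_nonneg' hd hnn ht, ?_⟩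
  rw [integral_Ioi_of_hasDerivAt_of_nonneg' hd hnn ht]
  simp only [hG]
  norm_num

lemma K0_integrable (z : ℝ) (hz : 0 < z) :
    IntegrableOn (fun u => Real.exp (-z * Real.cosh u)) (Set.Ioi 0) := by
  have hg : IntegrableOn (fun u => Real.exp (-(z/2)) * Real.exp (-(z/2) * u)) (Set.Ioi 0) :=
    (exp_neg_integrableOn_Ioi 0 (by positivity)).const_mul _
  apply hg.mono' ((Real.continuous_exp.comp (continuous_const.mul Real.continuous_cosh)).aestronglyMeasurable)
  filter_upwards [ae_restrict_mem measurableSet_Ioi] with u hu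
  simp only [Function.comp, Real.norm_eq_abs]
  rw [abs_of_nonneg (Real.exp_pos _).le, ← Real.exp_add]
  apply Real.exp_le_exp.mpr
  have h1 : (1 + u) / 2 ≤ Real.cosh u := by
    have h2 : 1 + u ≤ Real.exp u := by linarith [Real.add_one_le_exp u]
    have h3 : 0 < Real.exp (-u) := Real.exp_pos _
    rw [Real.cosh_eq]
    linarith
  show -z * Real.cosh u ≤ -(z/2) + -(z/2) * u
  nlinarith [h1, hz.le]

lemma K0_nonneg (z : ℝ) : 0 ≤ besselK0 z := by
  apply setIntegral_nonneg measurableSet_Ioi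
  intro u _; positivity

lemma lint_line (z : ℝ) (hz : 0 < z) :
    ∫⁻ u : ℝ, ENNReal.ofReal (Real.exp (-z * Real.cosh u)) = 2 * ENNReal.ofReal (besselK0 z) := by
  have hmeas : Measurable fun u : ℝ => ENNReal.ofReal (Real.exp (-z * Real.cosh u)) :=
    (Real.continuous_exp.comp (continuous_const.mul Real.continuous_cosh)).measurable.ennreal_ofReal
  have hIoi : ∫⁻ u in Set.Ioi (0:ℝ), ENNReal.ofReal (Real.exp (-z * Real.cosh u))
      = ENNReal.ofReal (besselK0 z) := by
    rw [← ofReal_integral_eq_lintegral_ofReal (K0_integrable z hz)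
      (Filter.Eventually.of_forall fun u => (Real.exp_pos _).le)]
    rfl
  have hIic : ∫⁻ u in Set.Iic (0:ℝ), ENNReal.ofReal (Real.exp (-z * Real.cosh u))
      = ENNReal.ofReal (besselK0 z) := by
    have hne : MeasurableEmbedding (Neg.neg : ℝ → ℝ) :=
      (Homeomorph.neg ℝ).isClosedEmbedding.measurableEmbedding
    calc ∫⁻ u in Set.Iic (0:ℝ), ENNReal.ofReal (Real.exp (-z * Real.cosh u))
        = ∫⁻ u in Set.Iic (0:ℝ), ENNReal.ofReal (Real.exp (-z * Real.cosh u))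
            ∂(Measure.map Neg.neg volume) := by rw [Measure.map_neg_eq_self]
      _ = ∫⁻ u, ENNReal.ofReal (Real.exp (-z * Real.cosh u))
            ∂(Measure.map Neg.neg (volume.restrict (Neg.neg ⁻¹' Set.Iic 0))) := by
          rw [hne.restrict_map]
      _ = ∫⁻ u in (Neg.neg ⁻¹' Set.Iic (0:ℝ)), ENNReal.ofReal (Real.exp (-z * Real.cosh (-u))) := by
          rw [lintegral_map hmeas measurable_neg]
      _ = ∫⁻ u in Set.Ici (0:ℝ), ENNReal.ofReal (Real.exp (-z * Real.cosh u)) := by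
          simp [Real.cosh_neg, Set.neg_preimage, Set.neg_Iic]
      _ = ENNReal.ofReal (besselK0 z) := by
          rw [← hIoi]
          apply setLIntegral_congr
          exact Ioi_ae_eq_Ici.symm
  have hsplit := lintegral_add_compl (μ := volume)
    (fun u : ℝ => ENNReal.ofReal (Real.exp (-z * Real.cosh u))) (measurableSet_Iic (a := (0:ℝ)))
  rw [Set.compl_Iic] at hsplit
  rw [← hsplit, hIic, hIoi, two_mul]

lemma lint_affine (b d : ℝ) (hb : b ≠ 0) (ψ : ℝ → ℝ≥0∞) (hψ : Measurable ψ) :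
    ∫⁻ x, ψ x = ENNReal.ofReal |b| * ∫⁻ u, ψ (d + b * u) := by
  have h2 : ∫⁻ t, ψ (d + t) ∂(Measure.map (b * ·) volume) = ∫⁻ u, ψ (d + b * u) :=
    lintegral_map (hψ.comp (measurable_const_add d)) (measurable_const_mul b)
  rw [Real.map_volume_mul_left hb, lintegral_smul_measure, smul_eq_mul] at h2
  have h3 : ∫⁻ t, ψ (d + t) = ∫⁻ x, ψ x := by
    simp_rw [add_comm d]
    exact lintegral_add_right_eq_self ψ d
  rw [← h2, h3, ← mul_assoc, ← ENNReal.ofReal_mul (abs_nonneg b)]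
  rw [← abs_mul, mul_inv_cancel₀ hb]
  simp

lemma expalg (β a b : ℝ) (hβ : β ≠ 0) :
    β * ((1/β) * Real.exp (a - Real.exp a) * Real.exp (-Real.exp b))
      = Real.exp a * Real.exp (-(Real.exp a + Real.exp b)) := by
  rw [Real.exp_sub, neg_add, Real.exp_add, Real.exp_neg, Real.exp_neg]
  field_simp

end GumbelAux
end Aux

set_option maxHeartbeats 1000000

theorem expected_gumbel_interval_length (β μx μy : ℝ) (hβ : 0 < β) :
    (∫ p : ℝ × ℝ, max (p.2 - p.1) 0 * maxGumbelPDF μx β p.1 * minGumbelPDF μy β p.2) =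
      2 * β * besselK0 (2 * Real.exp ((μx - μy) / (2 * β))) := by
  classical
  have hβ' : β ≠ 0 := hβ.ne'
  set f : ℝ → ℝ := maxGumbelPDF μx β with hfdef
  set g : ℝ → ℝ := minGumbelPDF μy β with hgdef
  set r : ℝ := (μx - μy) / (2 * β) with hrdef
  set z : ℝ := 2 * Real.exp r with hzdef
  have hzpos : 0 < z := by positivity
  set S : ℝ → ℝ := fun t => Real.exp (-Real.exp ((t - μy) / β)) with hSdef
  set B : ℝ → ℝ := fun q => r + q / (2 * β) with hBdef
  set ρ : ℝ → ℝ → ℝ≥0∞ := fun q u => ENNReal.ofReal (Real.exp (B q + u) *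
    Real.exp (-(Real.exp (B q + u) + Real.exp (B q - u)))) with hρdef
  -- continuity facts
  have hfc : Continuous f := by
    unfold f; unfold maxGumbelPDF; fun_prop
  have hgc : Continuous g := by
    unfold g; unfold minGumbelPDF; fun_prop
  have hSc : Continuous S := by unfold S; fun_prop
  have hfnn : ∀ x, 0 ≤ f x := fun x => GumbelAux.maxGumbel_nonneg μx β x hβ
  have hgnn : ∀ y, 0 ≤ g y := fun y => GumbelAux.minGumbel_nonneg μy β y hβ
  have hSnn : ∀ t, 0 ≤ S t := fun t => (Real.exp_pos _).le
  have hρc : Continuous fun p : ℝ × ℝ => Real.exp (B p.1 + p.2) *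
      Real.exp (-(Real.exp (B p.1 + p.2) + Real.exp (B p.1 - p.2))) := by
    unfold B; fun_prop
  have hρmeas : Measurable fun p : ℝ × ℝ => ρ p.1 p.2 := hρc.measurable.ennreal_ofReal
  -- Step A : inner integral over y
  have key_y : ∀ x : ℝ, (∫⁻ y, ENNReal.ofReal (max (y - x) 0 * f x * g y))
      = (∫⁻ q in Set.Ioi (0:ℝ), ENNReal.ofReal (S (x + q))) * ENNReal.ofReal (f x) := by
    intro x
    have h1 : ∀ y : ℝ, ENNReal.ofReal (max (y - x) 0 * f x * g y)
        = (ENNReal.ofReal (max (y - x) 0) * ENNReal.ofReal (g y)) * ENNReal.ofReal (f x) := by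
      intro y
      rw [show max (y - x) 0 * f x * g y = max (y - x) 0 * g y * f x by ring,
        ENNReal.ofReal_mul (mul_nonneg (le_max_right _ 0) (hgnn y)),
        ENNReal.ofReal_mul (le_max_right _ 0)]
    simp_rw [h1]
    have hmy : Measurable fun y : ℝ => ENNReal.ofReal (max (y - x) 0) * ENNReal.ofReal (g y) :=
      (((measurable_id.sub measurable_const).max measurable_const).ennreal_ofReal).mul
        (hgc.measurable.ennreal_ofReal)
    rw [lintegral_mul_const _ hmy]
    congr 1
    have hind : ∀ y : ℝ, Measurable ((Set.Iio (y - x)).indicator (fun _ : ℝ => (1:ℝ≥0∞))) :=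
      fun y => measurable_const.indicator measurableSet_Iio
    calc ∫⁻ y, ENNReal.ofReal (max (y - x) 0) * ENNReal.ofReal (g y)
        = ∫⁻ y, ∫⁻ q in Set.Ioi (0:ℝ),
            (Set.Iio (y - x)).indicator (fun _ => (1:ℝ≥0∞)) q * ENNReal.ofReal (g y) := by
          congr 1; funext y
          rw [GumbelAux.layer, lintegral_mul_const _ (hind y)]
      _ = ∫⁻ q in Set.Ioi (0:ℝ), ∫⁻ y,
            (Set.Iio (y - x)).indicator (fun _ => (1:ℝ≥0∞)) q * ENNReal.ofReal (g y) := by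
          apply lintegral_lintegral_swap
          apply Measurable.aemeasurable
          have heq : (Function.uncurry fun y q : ℝ =>
              (Set.Iio (y - x)).indicator (fun _ => (1:ℝ≥0∞)) q * ENNReal.ofReal (g y))
              = fun p : ℝ × ℝ =>
              ({p : ℝ × ℝ | p.2 < p.1 - x}.indicator (fun p => ENNReal.ofReal (g p.1)) p) := by
            funext p
            by_cases h : p.2 < p.1 - x <;>
              simp [Function.uncurry, Set.indicator, h]
          rw [heq]
          exact (hgc.measurable.comp measurable_fst).ennreal_ofReal.indicator
            (measurableSet_lt measurable_snd (measurable_fst.sub measurable_const))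
      _ = ∫⁻ q in Set.Ioi (0:ℝ), ENNReal.ofReal (S (x + q)) := by
          apply lintegral_congr
          intro q
          have heq2 : ∀ y : ℝ, (Set.Iio (y - x)).indicator (fun _ => (1:ℝ≥0∞)) q * ENNReal.ofReal (g y)
              = (Set.Ioi (x + q)).indicator (fun y => ENNReal.ofReal (g y)) y := by
            intro y
            by_cases h : x + q < y
            · have h' : q < y - x := by linarith
              simp [Set.indicator, h, h']
            · have h' : ¬ q < y - x := by intro hc; exact h (by linarith)
              simp [Set.indicator, h, h']
          rw [lintegral_congr heq2, lintegral_indicator measurableSet_Ioi,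
            ← ofReal_integral_eq_lintegral_ofReal (GumbelAux.surv_int μy β (x + q) hβ).1
              (Filter.Eventually.of_forall fun y => hgnn y),
            (GumbelAux.surv_int μy β (x + q) hβ).2]
  -- real-algebra key identity for the substitution
  have keyreal : ∀ q u : ℝ, β * (f ((μx + μy - q) / 2 + (-β) * u) *
      S ((μx + μy - q) / 2 + (-β) * u + q))
      = Real.exp (B q + u) * Real.exp (-(Real.exp (B q + u) + Real.exp (B q - u))) := by
    intro q u
    have e1 : -(((μx + μy - q) / 2 + (-β) * u) - μx) / β = B q + u := by
      simp only [hBdef, hrdef]; field_simp; ring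
    have e2 : (((μx + μy - q) / 2 + (-β) * u) + q - μy) / β = B q - u := by
      simp only [hBdef, hrdef]; field_simp; ring
    simp only [hfdef, hSdef, maxGumbelPDF]
    rw [e1, e2]
    exact GumbelAux.expalg β (B q + u) (B q - u) hβ'
  -- Step C : substitution x = d - β u, per q
  have key_x : ∀ q : ℝ, (∫⁻ x, ENNReal.ofReal (f x * S (x + q))) = ∫⁻ u, ρ q u := by
    intro q
    have hψ : Measurable fun x => ENNReal.ofReal (f x * S (x + q)) := by
      apply Continuous.measurable ?_ |>.ennreal_ofReal
      fun_prop
    rw [GumbelAux.lint_affine (-β) ((μx + μy - q) / 2) (neg_ne_zero.mpr hβ') _ hψ]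
    rw [abs_neg, abs_of_pos hβ]
    rw [← lintegral_const_mul _ (by
      apply Continuous.measurable ?_ |>.ennreal_ofReal
      fun_prop : Measurable fun u => ENNReal.ofReal (f ((μx + μy - q) / 2 + (-β) * u) *
        S ((μx + μy - q) / 2 + (-β) * u + q)))]
    apply lintegral_congr
    intro u
    rw [← ENNReal.ofReal_mul hβ.le, keyreal q u, hρdef]
  -- measurability of Φ
  have hΦmeas : Measurable fun u : ℝ => ∫⁻ q in Set.Ioi (0:ℝ), ρ q u := by
    apply Measurable.lintegral_prod_right
    exact (hρc.comp (continuous_snd.prodMk continuous_fst)).measurable.ennreal_ofReal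
  set Φ : ℝ → ℝ≥0∞ := fun u => ∫⁻ q in Set.Ioi (0:ℝ), ρ q u with hΦdef
  -- the main lintegral computation
  have E_eq : (∫⁻ p : ℝ × ℝ, ENNReal.ofReal (max (p.2 - p.1) 0 * f p.1 * g p.2))
      = ENNReal.ofReal (2 * β * besselK0 z) := by
    have hmeasF : Measurable fun p : ℝ × ℝ =>
        ENNReal.ofReal (max (p.2 - p.1) 0 * f p.1 * g p.2) := by
      apply Continuous.measurable ?_ |>.ennreal_ofReal
      fun_prop
    have step1 : (∫⁻ p : ℝ × ℝ, ENNReal.ofReal (max (p.2 - p.1) 0 * f p.1 * g p.2))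
        = ∫⁻ u : ℝ, Φ u := by
      rw [Measure.volume_eq_prod, lintegral_prod _ hmeasF.aemeasurable]
      calc ∫⁻ x, ∫⁻ y, ENNReal.ofReal (max (y - x) 0 * f x * g y)
          = ∫⁻ x, (∫⁻ q in Set.Ioi (0:ℝ), ENNReal.ofReal (S (x + q))) * ENNReal.ofReal (f x) := by
            apply lintegral_congr key_y
        _ = ∫⁻ x, ∫⁻ q in Set.Ioi (0:ℝ), ENNReal.ofReal (S (x + q)) * ENNReal.ofReal (f x) := by
            apply lintegral_congr
            intro x
            rw [lintegral_mul_const _ (by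
              apply Continuous.measurable ?_ |>.ennreal_ofReal
              fun_prop : Measurable fun q : ℝ => ENNReal.ofReal (S (x + q)))]
        _ = ∫⁻ q in Set.Ioi (0:ℝ), ∫⁻ x, ENNReal.ofReal (S (x + q)) * ENNReal.ofReal (f x) := by
            apply lintegral_lintegral_swap
            apply Measurable.aemeasurable
            apply Measurable.fun_mul
            · exact (Continuous.measurable (by fun_prop :
                Continuous fun p : ℝ × ℝ => S (p.1 + p.2))).ennreal_ofReal
            · exact (hfc.measurable.comp measurable_fst).ennreal_ofReal
        _ = ∫⁻ q in Set.Ioi (0:ℝ), ∫⁻ x, ENNReal.ofReal (f x * S (x + q)) := by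
            apply lintegral_congr
            intro q
            apply lintegral_congr
            intro x
            rw [← ENNReal.ofReal_mul (hSnn _), mul_comm]
        _ = ∫⁻ q in Set.Ioi (0:ℝ), ∫⁻ u, ρ q u := by
            apply lintegral_congr
            intro q
            exact key_x q
        _ = ∫⁻ u : ℝ, Φ u := by
            apply lintegral_lintegral_swap
            exact hρmeas.aemeasurable
    have hneg : ∫⁻ u : ℝ, Φ (-u) = ∫⁻ u : ℝ, Φ u := by
      have h := lintegral_map (μ := volume) hΦmeas measurable_neg
      rw [Measure.map_neg_eq_self] at h
      exact h.symm
    have keyu : ∀ u : ℝ, Φ u + Φ (-u) = ENNReal.ofReal (2 * β * Real.exp (-z * Real.cosh u)) := by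
      intro u
      have hq1 : Measurable fun q => ρ q u :=
        (hρc.comp (continuous_id.prodMk continuous_const)).measurable.ennreal_ofReal
      rw [hΦdef]
      simp only []
      rw [← lintegral_add_left hq1]
      have hpt : ∀ q : ℝ, ρ q u + ρ q (-u)
          = ENNReal.ofReal ((Real.exp (B q + u) + Real.exp (B q - u)) *
            Real.exp (-(Real.exp (B q + u) + Real.exp (B q - u)))) := by
        intro q
        rw [hρdef]
        simp only []
        rw [← ENNReal.ofReal_add (by positivity) (by positivity)]
        congr 1
        rw [show B q + -u = B q - u by ring, show B q - -u = B q + u by ring]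
        ring_nf
      rw [lintegral_congr hpt]
      have hqint := GumbelAux.qFTC β r u hβ
      have hBq : ∀ q : ℝ, B q = r + q / (2 * β) := fun q => rfl
      rw [← ofReal_integral_eq_lintegral_ofReal hqint.1
        (Filter.Eventually.of_forall fun q => by positivity)]
      rw [hqint.2]
      congr 1
      have hcosh : Real.exp (r + u) + Real.exp (r - u) = z * Real.cosh u := by
        rw [Real.cosh_eq, hzdef, Real.exp_add, Real.exp_sub, Real.exp_neg]
        field_simp
      rw [show -z * Real.cosh u = -(z * Real.cosh u) by ring, ← hcosh]
    have twoE : (2:ℝ≥0∞) * ∫⁻ u : ℝ, Φ u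
        = 2 * ENNReal.ofReal (2 * β * besselK0 z) := by
      have hΦnegmeas : Measurable fun u : ℝ => Φ (-u) := hΦmeas.comp measurable_neg
      calc (2:ℝ≥0∞) * ∫⁻ u : ℝ, Φ u = (∫⁻ u : ℝ, Φ u) + ∫⁻ u : ℝ, Φ (-u) := by
            rw [hneg, two_mul]
        _ = ∫⁻ u : ℝ, (Φ u + Φ (-u)) := (lintegral_add_left hΦmeas _).symm
        _ = ∫⁻ u : ℝ, ENNReal.ofReal (2 * β * Real.exp (-z * Real.cosh u)) :=
            lintegral_congr keyu
        _ = ENNReal.ofReal (2 * β) * ∫⁻ u : ℝ, ENNReal.ofReal (Real.exp (-z * Real.cosh u)) := by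
            have hm : Measurable fun u : ℝ => ENNReal.ofReal (Real.exp (-z * Real.cosh u)) :=
              (by fun_prop : Continuous fun u : ℝ =>
                Real.exp (-z * Real.cosh u)).measurable.ennreal_ofReal
            rw [← lintegral_const_mul _ hm]
            apply lintegral_congr
            intro u
            rw [← ENNReal.ofReal_mul (by positivity)]
        _ = ENNReal.ofReal (2 * β) * (2 * ENNReal.ofReal (besselK0 z)) := by
            rw [GumbelAux.lint_line z hzpos]
        _ = 2 * ENNReal.ofReal (2 * β * besselK0 z) := by
            rw [show (2:ℝ) * β * besselK0 z = (2 * β) * besselK0 z by ring,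
              ENNReal.ofReal_mul (show (0:ℝ) ≤ 2 * β by positivity)]
            ring
    rw [step1]
    exact (ENNReal.mul_right_inj (two_ne_zero) (ENNReal.ofNat_ne_top)).mp twoE
  -- conclude
  rw [integral_eq_lintegral_of_nonneg_ae
    (Filter.Eventually.of_forall fun p => by
      have := hfnn p.1; have := hgnn p.2
      have hm : (0:ℝ) ≤ max (p.2 - p.1) 0 := le_max_right _ 0
      positivity)
    (by fun_prop : Continuous fun p : ℝ × ℝ =>
      max (p.2 - p.1) 0 * f p.1 * g p.2).aestronglyMeasurable]
  rw [E_eq, ENNReal.toReal_ofReal (by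
    have := GumbelAux.K0_nonneg z
    positivity)]
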